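/- Let R be an odd squarefree positive integer, let S be a divisor of R with S > 1, and let d ≥ 2 be an integer. For each divisor k of R, set N_k = φ(k), and set N′_k = φ(k) if S ∣ k and N′_k = d·φ(k) if S ∤ k. Then, as rational numbers, ∑_{k ∣ R} μ(k)·(1/N_k − 1/N′_k) = (1/φ(S))·(1 − 1/d)·(∏_{q prime, q ∣ R/S} (1 − 1/φ(q)))·((∏_{q prime, q ∣ S} (φ(q) − 1)) − μ(S)). -/

import Mathlib

open ArithmeticFunction

/-- The arithmetic function `n ↦ 1/φ(n)` over `ℚ`. -/
noncomputable def invTotient : ArithmeticFunction ℚ :=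
  ⟨fun n => 1 / (Nat.totient n : ℚ), by simp⟩

lemma invTotient_apply (n : ℕ) : invTotient n = 1 / (Nat.totient n : ℚ) := rfl

lemma invTotient_mult : invTotient.IsMultiplicative := by
  constructor
  · simp [invTotient_apply]
  · intro m n h
    simp [invTotient_apply, Nat.totient_mul h, one_div, mul_inv, mul_comm]

lemma sum_moebius_div_totient {n : ℕ} (hn : Squarefree n) :
    ∑ k ∈ n.divisors, (moebius k : ℚ) / (Nat.totient k : ℚ) =
      ∏ p ∈ n.primeFactors, (1 - 1 / (Nat.totient p : ℚ)) := by
  trans (∑ d ∈ n.divisors, (moebius d : ℚ) * invTotient d)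
  · refine Finset.sum_congr rfl fun k _ => ?_
    rw [invTotient_apply]
    ring
  · rw [← IsMultiplicative.prodPrimeFactors_one_sub_of_squarefree invTotient invTotient_mult hn]
    exact Finset.prod_congr rfl fun p _ => by rw [invTotient_apply]

/-- The totient as an arithmetic function valued in `ℕ`. -/
def totientAF : ArithmeticFunction ℕ := ⟨Nat.totient, Nat.totient_zero⟩

lemma totient_prod_primeFactors {n : ℕ} (hn : Squarefree n) :
    (Nat.totient n : ℚ) = ∏ p ∈ n.primeFactors, (Nat.totient p : ℚ) := by
  have hmult : totientAF.IsMultiplicative := ⟨Nat.totient_one, fun h => Nat.totient_mul h⟩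
  have h1 : Nat.totient n = ∏ p ∈ n.primeFactors, Nat.totient p := by
    conv_lhs => rw [← Nat.prod_primeFactors_of_squarefree hn]
    have := hmult.map_prod (fun p : ℕ => p) n.primeFactors
      (fun p hp q hq hne => (Nat.coprime_primes (Nat.prime_of_mem_primeFactors hp)
        (Nat.prime_of_mem_primeFactors hq)).mpr hne)
    simpa [totientAF] using this
  rw [h1]
  push_cast
  ring

/-- For `R` odd squarefree, `S ∣ R` with `S > 1`, and `d ≥ 2`, setting
`N_k = φ(k)` and `N′_k = φ(k)` if `S ∣ k`, `N′_k = d·φ(k)` otherwise, one has the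
closed-form evaluation of `∑_{k ∣ R} μ(k)(1/N_k − 1/N′_k)`. -/
theorem stmt9 (R S d : ℕ) (hR0 : 0 < R) (hRodd : Odd R) (hRsq : Squarefree R)
    (hSR : S ∣ R) (hS1 : 1 < S) (hd : 2 ≤ d) :
    ∑ k ∈ R.divisors, (moebius k : ℚ) *
        (1 / (Nat.totient k : ℚ) -
          1 / (if S ∣ k then (Nat.totient k : ℚ) else (d : ℚ) * (Nat.totient k : ℚ))) =
      (1 / (Nat.totient S : ℚ)) * (1 - 1 / (d : ℚ)) *
        (∏ q ∈ (R / S).primeFactors, (1 - 1 / (Nat.totient q : ℚ))) *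
        ((∏ q ∈ S.primeFactors, ((Nat.totient q : ℚ) - 1)) - (moebius S : ℚ)) := by
  have hS0 : 0 < S := lt_trans one_pos hS1
  have hRS0 : 0 < R / S := Nat.div_pos (Nat.le_of_dvd hR0 hSR) hS0
  have hmulRS : S * (R / S) = R := Nat.mul_div_cancel' hSR
  have hSsq : Squarefree S := hRsq.squarefree_of_dvd hSR
  have hRSsq : Squarefree (R / S) := hRsq.squarefree_of_dvd (Nat.div_dvd_of_dvd hSR)
  have hcop : Nat.Coprime S (R / S) := by
    have h := hRsq
    rw [← hmulRS] at h
    exact (Nat.squarefree_mul_iff.mp h).1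
  have hd0 : (d : ℚ) ≠ 0 := by positivity
  have hφS0 : (Nat.totient S : ℚ) ≠ 0 := by
    exact_mod_cast (Nat.totient_pos.mpr hS0).ne'
  -- Step 1 : rewrite the summand
  have hstep1 : ∀ k ∈ R.divisors,
      (moebius k : ℚ) * (1 / (Nat.totient k : ℚ) -
        1 / (if S ∣ k then (Nat.totient k : ℚ) else (d : ℚ) * (Nat.totient k : ℚ))) =
      (1 - 1 / (d : ℚ)) * ((moebius k : ℚ) / (Nat.totient k : ℚ)) -
        (if S ∣ k then (1 - 1 / (d : ℚ)) * ((moebius k : ℚ) / (Nat.totient k : ℚ)) else 0) := by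
    intro k hk
    have hk0 : 0 < k := Nat.pos_of_mem_divisors hk
    have hφk : (Nat.totient k : ℚ) ≠ 0 := by
      exact_mod_cast (Nat.totient_pos.mpr hk0).ne'
    by_cases h : S ∣ k
    · simp [h]
    · simp only [h, if_false]
      field_simp
      ring
  rw [Finset.sum_congr rfl hstep1, Finset.sum_sub_distrib]
  -- Step 2 : the full sum
  have hA : ∑ k ∈ R.divisors, (1 - 1 / (d : ℚ)) * ((moebius k : ℚ) / (Nat.totient k : ℚ)) =
      (1 - 1 / (d : ℚ)) * ∏ p ∈ R.primeFactors, (1 - 1 / (Nat.totient p : ℚ)) := by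
    rw [← Finset.mul_sum, sum_moebius_div_totient hRsq]
  -- Step 3 : the sum over multiples of S, via the bijection m ↦ S * m
  have key : ∑ k ∈ R.divisors.filter (S ∣ ·), (moebius k : ℚ) / (Nat.totient k : ℚ) =
      ∑ m ∈ (R / S).divisors,
        ((moebius S : ℚ) / (Nat.totient S : ℚ)) * ((moebius m : ℚ) / (Nat.totient m : ℚ)) := by
    refine Finset.sum_nbij' (fun k => k / S) (fun m => S * m) ?_ ?_ ?_ ?_ ?_
    · intro k hk
      simp only [Finset.mem_filter, Nat.mem_divisors] at hk
      obtain ⟨⟨hkR, _⟩, t, rfl⟩ := hk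
      simp only [Nat.mul_div_cancel_left _ hS0]
      rw [Nat.mem_divisors]
      refine ⟨?_, hRS0.ne'⟩
      rw [← hmulRS] at hkR
      exact (mul_dvd_mul_iff_left hS0.ne').mp hkR
    · intro m hm
      rw [Nat.mem_divisors] at hm
      simp only [Finset.mem_filter, Nat.mem_divisors]
      exact ⟨⟨hmulRS ▸ mul_dvd_mul_left S hm.1, hR0.ne'⟩, dvd_mul_right _ _⟩
    · intro k hk
      simp only [Finset.mem_filter] at hk
      exact Nat.mul_div_cancel' hk.2
    · intro m _
      exact Nat.mul_div_cancel_left _ hS0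
    · intro k hk
      simp only [Finset.mem_filter, Nat.mem_divisors] at hk
      obtain ⟨⟨hkR, _⟩, t, rfl⟩ := hk
      simp only [Nat.mul_div_cancel_left _ hS0]
      have ht : t ∣ R / S := by
        rw [← hmulRS] at hkR
        exact (mul_dvd_mul_iff_left hS0.ne').mp hkR
      have hcst : Nat.Coprime S t := Nat.Coprime.coprime_dvd_right ht hcop
      rw [isMultiplicative_moebius.map_mul_of_coprime hcst, Nat.totient_mul hcst]
      push_cast
      rw [mul_div_mul_comm]
  have hB : ∑ k ∈ R.divisors,
      (if S ∣ k then (1 - 1 / (d : ℚ)) * ((moebius k : ℚ) / (Nat.totient k : ℚ)) else 0) =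
      (1 - 1 / (d : ℚ)) * (((moebius S : ℚ) / (Nat.totient S : ℚ)) *
        ∏ p ∈ (R / S).primeFactors, (1 - 1 / (Nat.totient p : ℚ))) := by
    rw [← Finset.sum_filter, ← Finset.mul_sum, key, ← Finset.mul_sum,
      sum_moebius_div_totient hRSsq]
  rw [hA, hB]
  -- Step 4 : split the product over primeFactors of R
  have hpf : R.primeFactors = S.primeFactors ∪ (R / S).primeFactors := by
    have h := Nat.Coprime.primeFactors_mul hcop
    rw [hmulRS] at h
    exact h
  have hsplit : ∏ p ∈ R.primeFactors, (1 - 1 / (Nat.totient p : ℚ)) =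
      (∏ p ∈ S.primeFactors, (1 - 1 / (Nat.totient p : ℚ))) *
        ∏ p ∈ (R / S).primeFactors, (1 - 1 / (Nat.totient p : ℚ)) := by
    rw [hpf, Finset.prod_union (Nat.Coprime.disjoint_primeFactors hcop)]
  have hPS : ∏ p ∈ S.primeFactors, (1 - 1 / (Nat.totient p : ℚ)) =
      (∏ p ∈ S.primeFactors, ((Nat.totient p : ℚ) - 1)) / (Nat.totient S : ℚ) := by
    rw [totient_prod_primeFactors hSsq, ← Finset.prod_div_distrib]
    refine Finset.prod_congr rfl fun q hq => ?_
    have hq0 : (Nat.totient q : ℚ) ≠ 0 := by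
      exact_mod_cast (Nat.totient_pos.mpr (Nat.prime_of_mem_primeFactors hq).pos).ne'
    field_simp
  rw [hsplit, hPS]
  field_simp
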